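/- The four states |000⟩, |+1−⟩, |1−+⟩, |−+1⟩ in ℂ² ⊗ ℂ² ⊗ ℂ² (where |±⟩ = (|0⟩ ± |1⟩)/√2) are mutually orthogonal, and no nonzero product vector a ⊗ b ⊗ c in ℂ² ⊗ ℂ² ⊗ ℂ² is orthogonal to all four; i.e., Shifts is a UPB. -/

import Mathlib

noncomputable def ket0 : EuclideanSpace ℂ (Fin 2) := WithLp.toLp 2 (![1, 0] : Fin 2 → ℂ)
noncomputable def ket1 : EuclideanSpace ℂ (Fin 2) := WithLp.toLp 2 (![0, 1] : Fin 2 → ℂ)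
noncomputable def ketP : EuclideanSpace ℂ (Fin 2) :=
  WithLp.toLp 2 (![(1 / Real.sqrt 2 : ℝ), (1 / Real.sqrt 2 : ℝ)] : Fin 2 → ℂ)
noncomputable def ketM : EuclideanSpace ℂ (Fin 2) :=
  WithLp.toLp 2 (![(1 / Real.sqrt 2 : ℝ), (-(1 / Real.sqrt 2) : ℝ)] : Fin 2 → ℂ)

/-- The Shifts states |000⟩, |+1−⟩, |1−+⟩, |−+1⟩, given by their three
tensor factors. -/
noncomputable def shifts : Fin 4 → Fin 3 → EuclideanSpace ℂ (Fin 2) :=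
  ![![ket0, ket0, ket0], ![ketP, ket1, ketM], ![ket1, ketM, ketP], ![ketM, ketP, ket1]]

namespace UPBaux

noncomputable def s : ℂ := ((1 / Real.sqrt 2 : ℝ) : ℂ)

lemma hs : s ≠ 0 := by
  simp only [s, Complex.ofReal_ne_zero]
  positivity

lemma inner_k0 (v : EuclideanSpace ℂ (Fin 2)) : (inner ℂ v ket0 : ℂ) = starRingEnd ℂ (v 0) := by
  simp [ket0, PiLp.inner_apply, Fin.sum_univ_two]

lemma inner_k1 (v : EuclideanSpace ℂ (Fin 2)) : (inner ℂ v ket1 : ℂ) = starRingEnd ℂ (v 1) := by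
  simp [ket1, PiLp.inner_apply, Fin.sum_univ_two]

lemma inner_kP (v : EuclideanSpace ℂ (Fin 2)) :
    (inner ℂ v ketP : ℂ) = starRingEnd ℂ (v 0) * s + starRingEnd ℂ (v 1) * s := by
  simp [ketP, s, PiLp.inner_apply, Fin.sum_univ_two]
  ring

lemma inner_kM (v : EuclideanSpace ℂ (Fin 2)) :
    (inner ℂ v ketM : ℂ) = starRingEnd ℂ (v 0) * s - starRingEnd ℂ (v 1) * s := by
  simp [ketM, s, PiLp.inner_apply, Fin.sum_univ_two]
  ring

lemma v_eq_zero (v : EuclideanSpace ℂ (Fin 2)) (h0 : starRingEnd ℂ (v 0) = 0)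
    (h1 : starRingEnd ℂ (v 1) = 0) : v = 0 := by
  rw [map_eq_zero] at h0 h1
  ext i; fin_cases i <;> simpa

/-- If `v` is orthogonal to two genuinely distinct members of `{ket0, ket1, ketP, ketM}`,
then `v = 0`. We prove this for every pair. -/
lemma z01 (v : EuclideanSpace ℂ (Fin 2)) (h : (inner ℂ v ket0 : ℂ) = 0)
    (h' : (inner ℂ v ket1 : ℂ) = 0) : v = 0 := by
  rw [inner_k0] at h; rw [inner_k1] at h'
  exact v_eq_zero v h h'

lemma z0P (v : EuclideanSpace ℂ (Fin 2)) (h : (inner ℂ v ket0 : ℂ) = 0)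
    (h' : (inner ℂ v ketP : ℂ) = 0) : v = 0 := by
  rw [inner_k0] at h; rw [inner_kP] at h'
  refine v_eq_zero v h ?_
  rw [h, zero_mul, zero_add] at h'
  exact (mul_eq_zero.mp h').resolve_right hs

lemma z0M (v : EuclideanSpace ℂ (Fin 2)) (h : (inner ℂ v ket0 : ℂ) = 0)
    (h' : (inner ℂ v ketM : ℂ) = 0) : v = 0 := by
  rw [inner_k0] at h; rw [inner_kM] at h'
  refine v_eq_zero v h ?_
  rw [h, zero_mul, zero_sub, neg_eq_zero] at h'
  exact (mul_eq_zero.mp h').resolve_right hs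

lemma z1P (v : EuclideanSpace ℂ (Fin 2)) (h : (inner ℂ v ket1 : ℂ) = 0)
    (h' : (inner ℂ v ketP : ℂ) = 0) : v = 0 := by
  rw [inner_k1] at h; rw [inner_kP] at h'
  refine v_eq_zero v ?_ h
  rw [h, zero_mul, add_zero] at h'
  exact (mul_eq_zero.mp h').resolve_right hs

lemma z1M (v : EuclideanSpace ℂ (Fin 2)) (h : (inner ℂ v ket1 : ℂ) = 0)
    (h' : (inner ℂ v ketM : ℂ) = 0) : v = 0 := by
  rw [inner_k1] at h; rw [inner_kM] at h'
  refine v_eq_zero v ?_ h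
  rw [h, zero_mul, sub_zero] at h'
  exact (mul_eq_zero.mp h').resolve_right hs

lemma zPM (v : EuclideanSpace ℂ (Fin 2)) (h : (inner ℂ v ketP : ℂ) = 0)
    (h' : (inner ℂ v ketM : ℂ) = 0) : v = 0 := by
  rw [inner_kP] at h; rw [inner_kM] at h'
  have ha : starRingEnd ℂ (v 0) * s = 0 := by linear_combination (h + h') / 2
  have hb : starRingEnd ℂ (v 1) * s = 0 := by linear_combination (h - h') / 2
  exact v_eq_zero v ((mul_eq_zero.mp ha).resolve_right hs)
    ((mul_eq_zero.mp hb).resolve_right hs)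

lemma o01 : (inner ℂ ket0 ket1 : ℂ) = 0 := by
  simp [ket0, ket1, PiLp.inner_apply, Fin.sum_univ_two]

lemma o10 : (inner ℂ ket1 ket0 : ℂ) = 0 := by
  simp [ket0, ket1, PiLp.inner_apply, Fin.sum_univ_two]

lemma oPM : (inner ℂ ketP ketM : ℂ) = 0 := by
  simp [ketP, ketM, PiLp.inner_apply, Fin.sum_univ_two]

lemma oMP : (inner ℂ ketM ketP : ℂ) = 0 := by
  simp [ketM, ketP, PiLp.inner_apply, Fin.sum_univ_two]

set_option maxHeartbeats 2000000 in
lemma key (j k : Fin 4) (hjk : j ≠ k) (i : Fin 3) (v : EuclideanSpace ℂ (Fin 2))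
    (h1 : (inner ℂ v (shifts j i) : ℂ) = 0) (h2 : (inner ℂ v (shifts k i) : ℂ) = 0) : v = 0 := by
  fin_cases j <;> fin_cases k <;> fin_cases i <;>
    simp only [shifts, Fin.isValue, Matrix.cons_val_zero, Matrix.cons_val_one, Matrix.head_cons,
      Matrix.cons_val_two, Matrix.tail_cons, Matrix.cons_val_three, Matrix.head_fin_const,
      ne_eq, not_true_eq_false] at h1 h2 hjk <;>
    first
      | exact absurd rfl hjk
      | exact z01 v h1 h2 | exact z01 v h2 h1
      | exact z0P v h1 h2 | exact z0P v h2 h1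
      | exact z0M v h1 h2 | exact z0M v h2 h1
      | exact z1P v h1 h2 | exact z1P v h2 h1
      | exact z1M v h1 h2 | exact z1M v h2 h1
      | exact zPM v h1 h2 | exact zPM v h2 h1

end UPBaux

open UPBaux in
/-- Shifts is a UPB: the four states are mutually orthogonal (orthogonality of
product states holds iff it holds in some tensor factor), and no product vector
a ⊗ b ⊗ c with all factors nonzero is orthogonal to all four. -/
theorem stmt11 :
    (∀ j k : Fin 4, j ≠ k → ∃ i : Fin 3, (inner ℂ (shifts j i) (shifts k i) : ℂ) = 0) ∧
    ¬ ∃ c : Fin 3 → EuclideanSpace ℂ (Fin 2),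
        (∀ i, c i ≠ 0) ∧ ∀ j : Fin 4, ∃ i : Fin 3, (inner ℂ (c i) (shifts j i) : ℂ) = 0 := by
  constructor
  · intro j k hjk
    fin_cases j <;> fin_cases k <;> simp only [ne_eq, not_true_eq_false] at hjk <;>
      first
        | exact absurd rfl hjk
        | exact ⟨0, o01⟩ | exact ⟨0, o10⟩ | exact ⟨0, oPM⟩ | exact ⟨0, oMP⟩
        | exact ⟨1, o01⟩ | exact ⟨1, o10⟩ | exact ⟨1, oPM⟩ | exact ⟨1, oMP⟩
        | exact ⟨2, o01⟩ | exact ⟨2, o10⟩ | exact ⟨2, oPM⟩ | exact ⟨2, oMP⟩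
  · rintro ⟨c, hc, h⟩
    choose f hf using h
    obtain ⟨j, k, hjk, hfe⟩ := Fintype.exists_ne_map_eq_of_card_lt f (by norm_num)
    have h1 := hf j
    have h2 := hf k
    rw [hfe] at h1
    exact hc (f k) (key j k hjk (f k) (c (f k)) h1 h2)
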